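/- Let G be a connected simple graph on N vertices. Suppose there exists a symmetric, entrywise nonnegative, irreducible matrix M ∈ M(G) having 𝟙 as an eigenvector and exactly s distinct eigenvalues. Then there exist s − 1 real matrices A^(1), …, A^(s−1), each in M(G), such that A^(s−1) ⋯ A^(1) = (1/N)·𝟙𝟙ᵀ. -/

import Mathlib

open Matrix

/-- A real `N × N` matrix complies with the graph `G` when its off-diagonal
entries vanish outside the edges of `G`. -/
def SimpleGraph.Complies {N : ℕ} (G : SimpleGraph (Fin N))
    (A : Matrix (Fin N) (Fin N) ℝ) : Prop :=
  ∀ i j : Fin N, i ≠ j → ¬ G.Adj i j → A i j = 0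

section Aux

variable {N : ℕ} (M : Matrix (Fin N) (Fin N) ℝ)

theorem aux_det_sub_smul_one (hH : M.IsHermitian) (μ : ℝ) :
    (M - μ • 1).det = ∏ i, (hH.eigenvalues i - μ) := by
  set V : Matrix (Fin N) (Fin N) ℝ := (hH.eigenvectorUnitary : Matrix (Fin N) (Fin N) ℝ) with hV
  have hmem := Unitary.mem_iff.mp hH.eigenvectorUnitary.2
  have h1 : V * star V = 1 := hmem.2
  have hD : (diagonal (fun i => hH.eigenvalues i - μ) : Matrix (Fin N) (Fin N) ℝ)
      = diagonal (id ∘ hH.eigenvalues) - μ • 1 := by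
    ext i j
    by_cases h : i = j <;> simp [h, diagonal_apply, one_apply]
  have h2 : M - μ • 1 = V * (diagonal (fun i => hH.eigenvalues i - μ)) * star V := by
    have h3 := hH.spectral_theorem
    simp only [RCLike.ofReal_real_eq_id, Function.comp_id, Unitary.conjStarAlgAut_apply] at h3
    rw [hD, Matrix.mul_sub, Matrix.sub_mul, mul_smul_comm, mul_one, smul_mul_assoc, h1]
    rw [← hV] at h3
    rw [← h3]
  have hVdet : V.det * (star V).det = 1 := by rw [← det_mul, h1, det_one]
  rw [h2, det_mul, det_mul, mul_right_comm, hVdet, one_mul, det_diagonal]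

theorem aux_eigSet_eq (hH : M.IsHermitian) :
    {μ : ℝ | ∃ v : Fin N → ℝ, v ≠ 0 ∧ M.mulVec v = μ • v} = Set.range hH.eigenvalues := by
  ext μ
  have hdet := aux_det_sub_smul_one M hH μ
  constructor
  · rintro ⟨v, hv, hMv⟩
    have : (M - μ • 1) *ᵥ v = 0 := by
      rw [sub_mulVec, smul_mulVec, one_mulVec, hMv, sub_self]
    have hd := (Matrix.exists_mulVec_eq_zero_iff).mp ⟨v, hv, this⟩
    rw [hdet] at hd
    obtain ⟨i, _, hi⟩ := Finset.prod_eq_zero_iff.mp hd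
    exact ⟨i, by linarith [sub_eq_zero.mp hi]⟩
  · rintro ⟨i, rfl⟩
    refine ⟨hH.eigenvectorBasis i, ?_, hH.mulVec_eigenvectorBasis i⟩
    intro h0
    have h1 := hH.eigenvectorBasis.orthonormal.1 i
    rw [show hH.eigenvectorBasis i = 0 from ?_] at h1
    · simp at h1
    · ext j; exact congrFun h0 j

theorem aux_pow_entry_nonneg (hnonneg : ∀ i j, 0 ≤ M i j) :
    ∀ m : ℕ, ∀ i j, 0 ≤ (M ^ m) i j := by
  intro m
  induction m with
  | zero => intro i j; by_cases h : i = j <;> simp [h, Matrix.one_apply]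
  | succ m ih =>
    intro i j
    rw [pow_succ, Matrix.mul_apply]
    exact Finset.sum_nonneg fun l _ => mul_nonneg (ih i l) (hnonneg l j)

theorem aux_pow_mulVec_eig {v : Fin N → ℝ} {lam : ℝ} (hv : M *ᵥ v = lam • v) :
    ∀ m : ℕ, (M ^ m) *ᵥ v = lam ^ m • v := by
  intro m
  induction m with
  | zero => simp
  | succ m ih =>
    rw [pow_succ, ← Matrix.mulVec_mulVec, hv, Matrix.mulVec_smul, ih, pow_succ', smul_smul]

theorem aux_k_pos (hnonneg : ∀ i j, 0 ≤ M i j)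
    (hirr : ∀ i j : Fin N, ∃ m : ℕ, 1 ≤ m ∧ 0 < (M ^ m) i j)
    {k : ℝ} (hk : M.mulVec (fun _ => (1 : ℝ)) = k • (fun _ => (1 : ℝ)))
    (hN : 0 < N) : 0 < k := by
  have i : Fin N := ⟨0, hN⟩
  have hk0 : 0 ≤ k := by
    have := congrFun hk i
    simp only [Matrix.mulVec, dotProduct, mul_one, Pi.smul_apply, smul_eq_mul] at this
    rw [← this]
    exact Finset.sum_nonneg fun j _ => by simpa using hnonneg i j
  obtain ⟨m, hm1, hmpos⟩ := hirr i i
  have hpow := congrFun (aux_pow_mulVec_eig M hk m) i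
  simp only [Matrix.mulVec, dotProduct, mul_one, Pi.smul_apply, smul_eq_mul] at hpow
  have hge : (M ^ m) i i ≤ ∑ j, (M ^ m) i j :=
    Finset.single_le_sum (fun j _ => aux_pow_entry_nonneg M hnonneg m i j) (Finset.mem_univ i)
  have hkm : 0 < k ^ m := by rw [← hpow] at *; linarith
  rcases lt_or_eq_of_le hk0 with h | h
  · exact h
  · exfalso; rw [← h, zero_pow (by omega)] at hkm; exact lt_irrefl 0 hkm

theorem aux_perron_const (hnonneg : ∀ i j, 0 ≤ M i j)
    (hirr : ∀ i j : Fin N, ∃ m : ℕ, 1 ≤ m ∧ 0 < (M ^ m) i j)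
    {k : ℝ} (hk : M.mulVec (fun _ => (1 : ℝ)) = k • (fun _ => (1 : ℝ)))
    (hN : 0 < N) {v : Fin N → ℝ} (hv : M *ᵥ v = k • v) :
    ∃ c : ℝ, v = fun _ => c := by
  have hne : (Finset.univ : Finset (Fin N)).Nonempty := ⟨⟨0, hN⟩, Finset.mem_univ _⟩
  obtain ⟨j0, _, hj0⟩ := Finset.exists_max_image Finset.univ v hne
  set c := v j0 with hc
  set u : Fin N → ℝ := fun i => c - v i with hu
  have hunn : ∀ i, 0 ≤ u i := fun i => sub_nonneg.mpr (hj0 i (Finset.mem_univ i))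
  have hMu : M *ᵥ u = k • u := by
    have : u = c • (fun _ => (1:ℝ)) - v := by funext i; simp [hu]
    rw [this, Matrix.mulVec_sub, Matrix.mulVec_smul, hk, hv, smul_comm, ← smul_sub]
  have huz : u = 0 := by
    by_contra h0
    obtain ⟨i0, hi0⟩ := Function.ne_iff.mp h0
    have hi0pos : 0 < u i0 := lt_of_le_of_ne (hunn i0) (Ne.symm (by simpa using hi0))
    obtain ⟨m, hm1, hmpos⟩ := hirr j0 i0
    have hpow := congrFun (aux_pow_mulVec_eig M hMu m) j0
    simp only [Matrix.mulVec, dotProduct, Pi.smul_apply, smul_eq_mul] at hpow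
    have hzero : u j0 = 0 := by simp [hu, hc]
    rw [hzero, mul_zero] at hpow
    have hge : (M ^ m) j0 i0 * u i0 ≤ ∑ j, (M ^ m) j0 j * u j :=
      Finset.single_le_sum
        (fun j _ => mul_nonneg (aux_pow_entry_nonneg M hnonneg m j0 j) (hunn j))
        (Finset.mem_univ i0)
    nlinarith
  exact ⟨c, funext fun i => by have := congrFun huz i; simp [hu] at this; linarith⟩

theorem aux_orth_sum_zero (hsymm : M.IsSymm)
    {k : ℝ} (hk : M.mulVec (fun _ => (1 : ℝ)) = k • (fun _ => (1 : ℝ)))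
    {v : Fin N → ℝ} {lam : ℝ} (hv : M *ᵥ v = lam • v) (hne : lam ≠ k) :
    ∑ j, v j = 0 := by
  have h1 : v ⬝ᵥ (M *ᵥ (fun _ => (1:ℝ))) = k * (v ⬝ᵥ (fun _ => (1:ℝ))) := by
    rw [hk, dotProduct_smul, smul_eq_mul]
  have h2 : v ⬝ᵥ (M *ᵥ (fun _ => (1:ℝ))) = lam * (v ⬝ᵥ (fun _ => (1:ℝ))) := by
    rw [dotProduct_mulVec, ← mulVec_transpose, hsymm.eq, hv, smul_dotProduct, smul_eq_mul]
  have h3 : v ⬝ᵥ (fun _ => (1:ℝ)) = ∑ j, v j := by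
    simp [dotProduct]
  rw [h3] at h1 h2
  rcases mul_eq_mul_right_iff.mp (h1.symm.trans h2) with h | h
  · exact absurd h.symm hne
  · exact h

theorem aux_list_prod_mulVec {n : ℕ} (A : Fin n → Matrix (Fin N) (Fin N) ℝ)
    (g : Fin n → ℝ) (v : Fin N → ℝ) (h : ∀ t, A t *ᵥ v = g t • v) :
    (List.ofFn A).reverse.prod *ᵥ v = (∏ t, g t) • v := by
  have key : ∀ L : List (Fin n), (L.map A).prod *ᵥ v = (L.map g).prod • v := by
    intro L
    induction L with
    | nil => simp
    | cons a L ih =>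
      simp only [List.map_cons, List.prod_cons, ← Matrix.mulVec_mulVec, ih,
        Matrix.mulVec_smul, h a, smul_smul, mul_comm]
  have h1 : (List.ofFn A).reverse = ((List.finRange n).reverse.map A) := by
    rw [List.ofFn_eq_map, List.map_reverse]
  have h2 : ((List.finRange n).reverse.map g).prod = ∏ t, g t := by
    rw [List.map_reverse, List.prod_reverse, ← List.ofFn_eq_map, List.prod_ofFn]
  rw [h1, key, h2]

end Aux

/-- If a connected graph `G` admits a symmetric, entrywise nonnegative,
irreducible compliant matrix `M` having the all-ones vector `𝟙` as an
eigenvector and exactly `s` distinct eigenvalues, then average consensus on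
`G` is achievable with `s - 1` compliant matrices. -/
theorem consensus_in_s_minus_one_steps {N : ℕ} (G : SimpleGraph (Fin N))
    (hG : G.Connected)
    (M : Matrix (Fin N) (Fin N) ℝ) (hM : G.Complies M)
    (hsymm : M.IsSymm) (hnonneg : ∀ i j, 0 ≤ M i j)
    (hirr : ∀ i j : Fin N, ∃ m : ℕ, 1 ≤ m ∧ 0 < (M ^ m) i j)
    (k : ℝ) (hk : M.mulVec (fun _ => (1 : ℝ)) = k • (fun _ => (1 : ℝ)))
    (s : ℕ)
    (heig : {μ : ℝ | ∃ v : Fin N → ℝ, v ≠ 0 ∧ M.mulVec v = μ • v}.ncard = s) :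
    ∃ A : Fin (s - 1) → Matrix (Fin N) (Fin N) ℝ,
      (∀ t : Fin (s - 1), G.Complies (A t)) ∧
      (List.ofFn A).reverse.prod = Matrix.of (fun _ _ => (N : ℝ)⁻¹) := by
  rcases Nat.eq_zero_or_pos N with hN | hN
  · -- degenerate case `N = 0`
    subst hN
    have hs : s = 0 := by
      rw [← heig]
      convert Set.ncard_empty ℝ
      ext μ
      simp only [Set.mem_setOf_eq, Set.mem_empty_iff_false, iff_false, not_exists]
      intro v ⟨hv, _⟩
      exact hv (Subsingleton.elim v 0)
    subst hs
    refine ⟨fun t => 0, fun t => t.elim0, ?_⟩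
    have : (List.ofFn (fun t : Fin (0 - 1) => (0 : Matrix (Fin 0) (Fin 0) ℝ))) = [] := by
      simp
    rw [this]
    ext i j
    exact i.elim0
  · -- main case `0 < N`
    have hH : M.IsHermitian := by
      rwa [Matrix.IsHermitian, conjTranspose_eq_transpose_of_trivial]
    have i00 : Fin N := ⟨0, hN⟩
    have hone_ne : (fun _ : Fin N => (1:ℝ)) ≠ 0 :=
      Function.ne_iff.mpr ⟨i00, by simp⟩
    set S := {μ : ℝ | ∃ v : Fin N → ℝ, v ≠ 0 ∧ M.mulVec v = μ • v} with hSdef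
    have hSeq : S = Set.range hH.eigenvalues := aux_eigSet_eq M hH
    set F : Finset ℝ := Finset.image hH.eigenvalues Finset.univ with hFdef
    have hSF : S = ↑F := by
      rw [hSeq, hFdef]
      ext μ
      simp
    have hFcard : F.card = s := by
      rw [← heig, hSF, Set.ncard_coe_finset]
    have hkS : k ∈ S := ⟨fun _ => (1:ℝ), hone_ne, hk⟩
    have hkF : k ∈ F := by rwa [hSF, Finset.mem_coe] at hkS
    set T : Finset ℝ := F.erase k with hTdef
    have hTcard : T.card = s - 1 := by
      rw [hTdef, Finset.card_erase_of_mem hkF, hFcard]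
    -- enumeration of T
    set μf : Fin (s - 1) → ℝ := fun t => (T.equivFin.symm (Fin.cast hTcard.symm t) : ℝ)
      with hμdef
    have hμT : ∀ t, μf t ∈ T := fun t => (T.equivFin.symm (Fin.cast hTcard.symm t)).2
    have hμk : ∀ t, μf t ≠ k := fun t => Finset.ne_of_mem_erase (hμT t)
    have hμsurj : ∀ x ∈ T, ∃ t, μf t = x := by
      intro x hx
      refine ⟨Fin.cast hTcard (T.equivFin ⟨x, hx⟩), ?_⟩
      simp [hμdef]
    -- the matrices
    set A : Fin (s - 1) → Matrix (Fin N) (Fin N) ℝ :=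
      fun t => (k - μf t)⁻¹ • (M - μf t • 1) with hAdef
    have hcompl : ∀ t : Fin (s - 1), G.Complies (A t) := by
      intro t i j hij hadj
      simp only [hAdef, Matrix.smul_apply, Matrix.sub_apply, Matrix.one_apply_ne hij,
        hM i j hij hadj, smul_eq_mul]
      ring
    refine ⟨A, hcompl, ?_⟩
    -- action of the product on an eigenvector
    have haction : ∀ (v : Fin N → ℝ) (lam : ℝ), M *ᵥ v = lam • v →
        (List.ofFn A).reverse.prod *ᵥ v = (∏ t, (lam - μf t) * (k - μf t)⁻¹) • v := by
      intro v lam hv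
      apply aux_list_prod_mulVec
      intro t
      rw [hAdef]
      rw [smul_mulVec, sub_mulVec, smul_mulVec, one_mulVec, hv, ← sub_smul,
        smul_smul, mul_comm]
    -- key computation on eigenbasis
    have key : ∀ i : Fin N,
        (List.ofFn A).reverse.prod *ᵥ ⇑(hH.eigenvectorBasis i)
          = (Matrix.of (fun _ _ => (N : ℝ)⁻¹)) *ᵥ ⇑(hH.eigenvectorBasis i) := by
      intro i
      set v : Fin N → ℝ := ⇑(hH.eigenvectorBasis i) with hvdef
      set lam : ℝ := hH.eigenvalues i with hlamdef
      have hv : M *ᵥ v = lam • v := hH.mulVec_eigenvectorBasis i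
      have hQ : ∀ w : Fin N → ℝ, (Matrix.of (fun _ _ => (N : ℝ)⁻¹)) *ᵥ w
          = ((N : ℝ)⁻¹ * ∑ j, w j) • (fun _ : Fin N => (1:ℝ)) := by
        intro w
        funext j
        simp [Matrix.mulVec, dotProduct, ← Finset.mul_sum]
      rcases eq_or_ne lam k with hlk | hlk
      · -- eigenvalue k : eigenvector is constant
        obtain ⟨c, hc⟩ := aux_perron_const M hnonneg hirr hk hN (hlk ▸ hv)
        have hprod : (∏ t, (lam - μf t) * (k - μf t)⁻¹) = 1 := by
          apply Finset.prod_eq_one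
          intro t _
          rw [hlk]
          exact mul_inv_cancel₀ (sub_ne_zero.mpr (Ne.symm (hμk t)))
        rw [haction v lam hv, hprod, one_smul, hQ, hc]
        funext j
        simp only [Pi.smul_apply, smul_eq_mul, mul_one]
        rw [Finset.sum_const, Finset.card_univ, Fintype.card_fin, nsmul_eq_mul]
        field_simp
      · -- other eigenvalues : product kills v, and v ⟂ 𝟙
        have hlamS : lam ∈ S := by
          rw [hSeq]; exact ⟨i, rfl⟩
        have hlamT : lam ∈ T := by
          rw [hTdef]
          exact Finset.mem_erase.mpr ⟨hlk, by rwa [hSF, Finset.mem_coe] at hlamS⟩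
        obtain ⟨t0, ht0⟩ := hμsurj lam hlamT
        have hprod : (∏ t, (lam - μf t) * (k - μf t)⁻¹) = 0 := by
          apply Finset.prod_eq_zero (Finset.mem_univ t0)
          rw [ht0, sub_self, zero_mul]
        have hsum : ∑ j, v j = 0 := aux_orth_sum_zero M hsymm hk hv hlk
        rw [haction v lam hv, hprod, zero_smul, hQ, hsum]
        funext j
        simp
    -- conclude matrix equality from agreement on the eigenbasis
    have h : ((List.ofFn A).reverse.prod).mulVecLin
        = (Matrix.of (fun _ _ => (N : ℝ)⁻¹) : Matrix (Fin N) (Fin N) ℝ).mulVecLin := by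
      apply Module.Basis.ext (hH.eigenvectorBasis.toBasis.map (WithLp.linearEquiv 2 ℝ (Fin N → ℝ)))
      intro i
      simpa [mulVecLin_apply] using key i
    ext i j
    have := congrFun (DFunLike.congr_fun h (Pi.single j 1)) i
    simpa [mulVecLin_apply, mulVec_single] using this
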